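/- Let X and Y be topological spaces, D_X ⊆ X and D_Y ⊆ Y closed discrete subsets, and φ : Y → X an injection such that φ[Y \ D_Y] = D_X and φ[Y] is dense in X. If D is a closed discrete subset of X and φ⁻¹[D] is an F_σ subset of Y, then D is an F_σ subset of the space ⟨X, σ(τ_X, τ_Y, φ)⟩. -/

import Mathlib

open Set Topology

/-- The topology σ(τ_X, τ_Y, φ): open sets of X whose φ-preimage is open in Y. -/
def sigmaTop {X : Type*} {Y : Type*} (tX : TopologicalSpace X) (tY : TopologicalSpace Y)
    (φ : Y → X) : TopologicalSpace X where
  IsOpen U := tX.IsOpen U ∧ tY.IsOpen (φ ⁻¹' U)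
  isOpen_univ := ⟨tX.isOpen_univ, by simpa using tY.isOpen_univ⟩
  isOpen_inter U V hU hV :=
    ⟨tX.isOpen_inter U V hU.1 hV.1, by
      rw [Set.preimage_inter]
      exact tY.isOpen_inter _ _ hU.2 hV.2⟩
  isOpen_sUnion s hs :=
    ⟨tX.isOpen_sUnion s fun U hU => (hs U hU).1, by
      rw [Set.preimage_sUnion]
      exact @isOpen_biUnion _ _ tY _ _ fun U hU => (hs U hU).2⟩

/-- A set is closed discrete: closed, and its subspace topology is discrete. -/
def ClosedDiscrete {X : Type*} (t : TopologicalSpace X) (D : Set X) : Prop :=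
  @IsClosed X t D ∧ @DiscreteTopology D (TopologicalSpace.induced (Subtype.val : D → X) t)

/-- A set is F_σ: a countable union of closed sets. -/
def IsFsigma {X : Type*} (t : TopologicalSpace X) (s : Set X) : Prop :=
  ∃ F : ℕ → Set X, (∀ n, @IsClosed X t (F n)) ∧ s = ⋃ n, F n

/-- Any subset of a closed discrete set is closed. -/
lemma subset_closedDiscrete_isClosed {X : Type*} (t : TopologicalSpace X) {D S : Set X}
    (hD : ClosedDiscrete t D) (hS : S ⊆ D) : @IsClosed X t S := by
  letI := t
  obtain ⟨hDc, hdisc⟩ := hD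
  haveI : DiscreteTopology D := hdisc
  have hEq : S = Subtype.val '' ((Subtype.val : D → X) ⁻¹' S) := by
    rw [Subtype.image_preimage_coe]
    exact (Set.inter_eq_right.mpr hS).symm
  rw [hEq]
  exact hDc.isClosedEmbedding_subtypeVal.isClosedMap _ (isClosed_discrete _)

theorem statement2 {X Y : Type*} (tX : TopologicalSpace X) (tY : TopologicalSpace Y)
    (DX : Set X) (DY : Set Y) (φ : Y → X)
    (hDX : ClosedDiscrete tX DX) (hDY : ClosedDiscrete tY DY)
    (hinj : Function.Injective φ)
    (himg : φ '' DYᶜ = DX)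
    (hdense : @Dense X tX (Set.range φ))
    (D : Set X) (hD : ClosedDiscrete tX D)
    (hpre : IsFsigma tY (φ ⁻¹' D)) :
    IsFsigma (sigmaTop tX tY φ) D := by
  obtain ⟨G, hGc, hGu⟩ := hpre
  have hGsub : ∀ n, G n ⊆ φ ⁻¹' D := fun n =>
    hGu ▸ Set.subset_iUnion G n
  refine ⟨fun n => (D \ Set.range φ) ∪ φ '' G n, fun n => ?_, ?_⟩
  · set F := (D \ Set.range φ) ∪ φ '' G n with hF
    have hsub : F ⊆ D := by
      rintro x (⟨hx, -⟩ | ⟨y, hy, rfl⟩)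
      · exact hx
      · exact hGsub n hy
    have hX : @IsClosed X tX F := subset_closedDiscrete_isClosed tX hD hsub
    have hpreF : φ ⁻¹' F = G n := by
      ext y
      simp only [hF, Set.mem_preimage, Set.mem_union, Set.mem_diff, Set.mem_range,
        hinj.mem_set_image]
      constructor
      · rintro (⟨-, hr⟩ | h)
        · exact absurd ⟨y, rfl⟩ hr
        · exact h
      · exact fun h => Or.inr h
    have hY : tY.IsOpen (φ ⁻¹' Fᶜ) := by
      rw [Set.preimage_compl, hpreF]
      exact (hGc n).isOpen_compl
    exact @IsClosed.mk X (sigmaTop tX tY φ) F ⟨hX.isOpen_compl, hY⟩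
  · ext x
    simp only [Set.mem_iUnion, Set.mem_union, Set.mem_diff, Set.mem_range]
    constructor
    · intro hx
      by_cases hr : ∃ y, φ y = x
      · obtain ⟨y, rfl⟩ := hr
        have : y ∈ φ ⁻¹' D := hx
        rw [hGu] at this
        obtain ⟨n, hn⟩ := Set.mem_iUnion.mp this
        exact ⟨n, Or.inr ⟨y, hn, rfl⟩⟩
      · exact ⟨0, Or.inl ⟨hx, hr⟩⟩
    · rintro ⟨n, ⟨hx, -⟩ | ⟨y, hy, rfl⟩⟩
      · exact hx
      · exact hGsub n hy
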